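/- arXiv:2302.12473 — 2 statements merged into one kernel-verified Lean document; each statement's English description precedes it below -/
import Mathlib

section
/- The elementary symmetric polynomials form a subalgebra basis for the symmetric polynomials in three variables: with respect to the degree-lexicographic monomial order on MvPolynomial (Fin 3) ℚ in which X0 > X1 > X2, the initial algebra of the subalgebra A of all symmetric polynomials (those invariant under every permutation of the variables) equals the ℚ-subalgebra generated by the three monomials X0, X0·X1, and X0·X1·X2. In particular, for every nonzero symmetric polynomial f, its leading term lies in Algebra.adjoin ℚ {X0, X0·X1, X0·X1·X2}. -/
open MvPolynomial

noncomputable section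

/-- `m` is the degree-lexicographic monomial order on `Fin n →₀ ℕ` (total degree first,
ties broken lexicographically with `X 0 > X 1 > …`). -/
def MonomialOrder.IsDegLex {n : ℕ} (m : MonomialOrder (Fin n)) : Prop :=
  ∀ a b : Fin n →₀ ℕ, m.toSyn a < m.toSyn b ↔
    ((a.sum fun _ e => e) < (b.sum fun _ e => e) ∨
      ((a.sum fun _ e => e) = (b.sum fun _ e => e) ∧ toLex a < toLex b))

variable {n : ℕ}

/-- The degree (largest exponent vector) of a polynomial with respect to a monomial order. -/
def MonomialOrder.degree' (m : MonomialOrder (Fin n)) (f : MvPolynomial (Fin n) ℚ) :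
    Fin n →₀ ℕ :=
  m.toSyn.symm (f.support.sup fun d => m.toSyn d)

/-- The leading term of a polynomial with respect to a monomial order. -/
def MonomialOrder.leadTerm (m : MonomialOrder (Fin n)) (f : MvPolynomial (Fin n) ℚ) :
    MvPolynomial (Fin n) ℚ :=
  monomial (m.degree' f) (f.coeff (m.degree' f))

/-- The initial algebra of a subalgebra `A`: the `ℚ`-subalgebra generated by the leading
terms of the nonzero elements of `A`. -/
def MonomialOrder.initialAlgebra (m : MonomialOrder (Fin n))
    (A : Subalgebra ℚ (MvPolynomial (Fin n) ℚ)) : Subalgebra ℚ (MvPolynomial (Fin n) ℚ) :=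
  Algebra.adjoin ℚ {p | ∃ a ∈ A, a ≠ 0 ∧ p = m.leadTerm a}

namespace Aux

variable (m : MonomialOrder (Fin n))

lemma degree'_mem_support {f : MvPolynomial (Fin n) ℚ} (hf : f ≠ 0) :
    m.degree' f ∈ f.support := by
  obtain ⟨d, hd, hsup⟩ := Finset.exists_mem_eq_sup f.support
    (MvPolynomial.support_nonempty.mpr hf) fun d => m.toSyn d
  have : m.degree' f = d := by
    rw [MonomialOrder.degree', hsup]; exact m.toSyn.symm_apply_apply d
  rwa [this]

lemma le_degree' {f : MvPolynomial (Fin n) ℚ} {e : Fin n →₀ ℕ} (he : e ∈ f.support) :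
    m.toSyn e ≤ m.toSyn (m.degree' f) := by
  rw [MonomialOrder.degree', AddEquiv.apply_symm_apply]
  exact Finset.le_sup he

lemma degree'_anti {f : MvPolynomial (Fin n) ℚ} (hm : m.IsDegLex) (hf : f.IsSymmetric)
    (h0 : f ≠ 0) {i j : Fin n} (hij : i < j) : m.degree' f j ≤ m.degree' f i := by
  by_contra hlt
  push_neg at hlt
  set d := m.degree' f with hd
  set d' := Finsupp.mapDomain (Equiv.swap i j) d with hd'
  have hmem : d' ∈ f.support := by
    rw [MvPolynomial.mem_support_iff]
    have h1 : MvPolynomial.coeff (Finsupp.mapDomain (⇑(Equiv.swap i j)) d)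
        (rename (⇑(Equiv.swap i j)) f) = MvPolynomial.coeff d f :=
      MvPolynomial.coeff_rename_mapDomain _ (Equiv.swap i j).injective f d
    rw [hf (Equiv.swap i j)] at h1
    rw [hd', h1]
    exact MvPolynomial.mem_support_iff.mp (degree'_mem_support m h0)
  have happ : ∀ k, d' k = d (Equiv.swap i j k) := by
    intro k
    rw [hd', Finsupp.mapDomain_equiv_apply]
    simp
  have hsum : (d'.sum fun _ e => e) = (d.sum fun _ e => e) := by
    rw [hd']
    exact Finsupp.sum_mapDomain_index (fun _ => rfl) (fun _ _ _ => rfl)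
  have hlex : toLex d < toLex d' := by
    rw [Finsupp.Lex.lt_iff]
    refine ⟨i, fun k hk => ?_, ?_⟩
    · show d k = d' k
      rw [happ, Equiv.swap_apply_of_ne_of_ne (ne_of_lt hk) (ne_of_lt (hk.trans hij))]
    · show d i < d' i
      rw [happ, Equiv.swap_apply_left]
      exact hlt
  have hlt' : m.toSyn d < m.toSyn d' := (hm d d').mpr (Or.inr ⟨hsum.symm, hlex⟩)
  exact absurd (le_degree' m hmem) (not_le.mpr hlt')

lemma monomial_mem_adjoin {d : Fin 3 →₀ ℕ} (h01 : d 1 ≤ d 0) (h12 : d 2 ≤ d 1) (c : ℚ) :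
    (monomial d c : MvPolynomial (Fin 3) ℚ) ∈
      Algebra.adjoin ℚ ({X 0, X 0 * X 1, X 0 * X 1 * X 2} : Set (MvPolynomial (Fin 3) ℚ)) := by
  have heq : (monomial d c : MvPolynomial (Fin 3) ℚ) =
      C c * (X 0) ^ (d 0 - d 1) * (X 0 * X 1) ^ (d 1 - d 2) * (X 0 * X 1 * X 2) ^ d 2 := by
    have hX : ∀ i : Fin 3, (X i : MvPolynomial (Fin 3) ℚ) = monomial (Finsupp.single i 1) 1 :=
      fun i => rfl
    rw [hX 0, hX 1, hX 2]
    simp only [monomial_mul, monomial_pow, C_mul_monomial, one_pow, mul_one, one_mul]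
    rw [MvPolynomial.monomial_eq_monomial_iff]
    left
    refine ⟨?_, by ring⟩
    ext k
    fin_cases k <;>
      simp [Finsupp.single_apply, Finsupp.smul_apply, smul_eq_mul] <;> omega
  rw [heq]
  have h0 : (X 0 : MvPolynomial (Fin 3) ℚ) ∈
      Algebra.adjoin ℚ ({X 0, X 0 * X 1, X 0 * X 1 * X 2} : Set (MvPolynomial (Fin 3) ℚ)) :=
    Algebra.subset_adjoin (by simp)
  have h1 : (X 0 * X 1 : MvPolynomial (Fin 3) ℚ) ∈
      Algebra.adjoin ℚ ({X 0, X 0 * X 1, X 0 * X 1 * X 2} : Set (MvPolynomial (Fin 3) ℚ)) :=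
    Algebra.subset_adjoin (by simp)
  have h2 : (X 0 * X 1 * X 2 : MvPolynomial (Fin 3) ℚ) ∈
      Algebra.adjoin ℚ ({X 0, X 0 * X 1, X 0 * X 1 * X 2} : Set (MvPolynomial (Fin 3) ℚ)) :=
    Algebra.subset_adjoin (by simp)
  have hC : (C c : MvPolynomial (Fin 3) ℚ) ∈
      Algebra.adjoin ℚ ({X 0, X 0 * X 1, X 0 * X 1 * X 2} : Set (MvPolynomial (Fin 3) ℚ)) := by
    rw [← MvPolynomial.algebraMap_eq]
    exact Subalgebra.algebraMap_mem _ c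
  exact mul_mem (mul_mem (mul_mem hC (pow_mem h0 _)) (pow_mem h1 _)) (pow_mem h2 _)

lemma esymm_ne_zero {k : ℕ} (hk : k ≤ 3) : esymm (Fin 3) ℚ k ≠ 0 := by
  classical
  rw [← MvPolynomial.support_nonempty, support_esymm]
  apply Finset.Nonempty.image
  rw [Finset.powersetCard_nonempty]
  simpa using hk

lemma degree'_esymm_spec (m : MonomialOrder (Fin 3)) (hm : m.IsDegLex) {k : ℕ}
    (hk0 : 0 < k) (hk : k ≤ 3) :
    ∀ i : Fin 3, m.degree' (esymm (Fin 3) ℚ k) i = if (i : ℕ) < k then 1 else 0 := by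
  classical
  set d := m.degree' (esymm (Fin 3) ℚ k) with hd
  have hmem := degree'_mem_support m (esymm_ne_zero hk)
  rw [support_esymm] at hmem
  obtain ⟨t, ht, hdt⟩ := Finset.mem_image.mp hmem
  have htc : t.card = k := Finset.mem_powersetCard_univ.mp ht
  have hval : ∀ i, d i = if i ∈ t then 1 else 0 := by
    intro i
    rw [hd, ← hdt, Finset.sum_apply']
    simp [Finsupp.single_apply]
  have h01 : d 1 ≤ d 0 :=
    degree'_anti m hm (esymm_isSymmetric _ _ k) (esymm_ne_zero hk) (by decide)
  have h12 : d 2 ≤ d 1 :=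
    degree'_anti m hm (esymm_isSymmetric _ _ k) (esymm_ne_zero hk) (by decide)
  have hsum : d 0 + d 1 + d 2 = k := by
    have h1 : ∑ i : Fin 3, d i = ∑ i : Fin 3, if i ∈ t then 1 else 0 :=
      Finset.sum_congr rfl fun i _ => hval i
    rw [Fin.sum_univ_three] at h1
    rw [h1, Finset.sum_ite_mem, Finset.univ_inter, Finset.sum_const, smul_eq_mul, mul_one, htc]
  have hb : ∀ i, d i ≤ 1 := fun i => by rw [hval]; split <;> omega
  have hb0 := hb 0
  have hb1 := hb 1
  have hb2 := hb 2
  intro i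
  fin_cases i
  · show d 0 = if (0 : ℕ) < k then 1 else 0
    split <;> omega
  · show d 1 = if (1 : ℕ) < k then 1 else 0
    split <;> omega
  · show d 2 = if (2 : ℕ) < k then 1 else 0
    split <;> omega

lemma gen_in_initial (m : MonomialOrder (Fin 3)) {f : MvPolynomial (Fin 3) ℚ}
    (hf : f.IsSymmetric) (h0 : f ≠ 0) :
    (monomial (m.degree' f) 1 : MvPolynomial (Fin 3) ℚ) ∈
      m.initialAlgebra (symmetricSubalgebra (Fin 3) ℚ) := by
  set c := f.coeff (m.degree' f) with hc
  have hc0 : c ≠ 0 := MvPolynomial.mem_support_iff.mp (degree'_mem_support m h0)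
  set a := (c⁻¹ • f : MvPolynomial (Fin 3) ℚ) with ha
  have hsupp : a.support = f.support := by
    ext e
    simp only [ha, MvPolynomial.mem_support_iff, MvPolynomial.coeff_smul, smul_eq_mul,
      mul_ne_zero_iff]
    exact ⟨fun h => h.2, fun h => ⟨inv_ne_zero hc0, h⟩⟩
  have hdeg : m.degree' a = m.degree' f := by
    rw [MonomialOrder.degree', MonomialOrder.degree', hsupp]
  have hca : a.coeff (m.degree' a) = 1 := by
    rw [hdeg, ha, MvPolynomial.coeff_smul, ← hc, smul_eq_mul, inv_mul_cancel₀ hc0]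
  have ha0 : a ≠ 0 := by
    intro h
    rw [h] at hca
    simp at hca
  apply Algebra.subset_adjoin
  refine ⟨a, (mem_symmetricSubalgebra _).mpr (hf.smul c⁻¹), ha0, ?_⟩
  rw [MonomialOrder.leadTerm, hca, hdeg]

end Aux

open Aux in
/-- The elementary symmetric polynomials form a subalgebra basis for the symmetric
polynomials in three variables. -/
theorem initialAlgebra_symmetric (m : MonomialOrder (Fin 3)) (hm : m.IsDegLex) :
    m.initialAlgebra (symmetricSubalgebra (Fin 3) ℚ) =
      Algebra.adjoin ℚ ({X 0, X 0 * X 1, X 0 * X 1 * X 2} : Set (MvPolynomial (Fin 3) ℚ)) ∧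
    ∀ f : MvPolynomial (Fin 3) ℚ, f.IsSymmetric → f ≠ 0 →
      m.leadTerm f ∈
        Algebra.adjoin ℚ ({X 0, X 0 * X 1, X 0 * X 1 * X 2} :
          Set (MvPolynomial (Fin 3) ℚ)) := by
  have key : ∀ f : MvPolynomial (Fin 3) ℚ, f.IsSymmetric → f ≠ 0 →
      m.leadTerm f ∈ Algebra.adjoin ℚ
        ({X 0, X 0 * X 1, X 0 * X 1 * X 2} : Set (MvPolynomial (Fin 3) ℚ)) := by
    intro f hf h0
    rw [MonomialOrder.leadTerm]
    exact monomial_mem_adjoin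
      (degree'_anti m hm hf h0 (by decide : (0 : Fin 3) < 1))
      (degree'_anti m hm hf h0 (by decide : (1 : Fin 3) < 2)) _
  refine ⟨le_antisymm ?_ ?_, key⟩
  · rw [MonomialOrder.initialAlgebra]
    apply Algebra.adjoin_le
    rintro p ⟨a, haA, ha0, rfl⟩
    exact key a ((mem_symmetricSubalgebra a).mp haA) ha0
  · apply Algebra.adjoin_le
    have hX : ∀ i : Fin 3, (X i : MvPolynomial (Fin 3) ℚ) = monomial (Finsupp.single i 1) 1 :=
      fun i => rfl
    rintro p (rfl | rfl | rfl)
    · have h1 : m.degree' (esymm (Fin 3) ℚ 1) = Finsupp.single 0 1 := by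
        ext i
        rw [degree'_esymm_spec m hm (by norm_num) (by norm_num)]
        fin_cases i <;> simp [Finsupp.single_apply]
      have := gen_in_initial m (esymm_isSymmetric (Fin 3) ℚ 1) (esymm_ne_zero (by norm_num))
      rw [h1] at this
      rwa [hX 0]
    · have h2 : m.degree' (esymm (Fin 3) ℚ 2) = Finsupp.single 0 1 + Finsupp.single 1 1 := by
        ext i
        rw [degree'_esymm_spec m hm (by norm_num) (by norm_num)]
        fin_cases i <;> simp [Finsupp.single_apply]
      have := gen_in_initial m (esymm_isSymmetric (Fin 3) ℚ 2) (esymm_ne_zero (by norm_num))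
      rw [h2] at this
      rw [hX 0, hX 1, monomial_mul, mul_one]
      exact this
    · have h3 : m.degree' (esymm (Fin 3) ℚ 3) =
          Finsupp.single 0 1 + Finsupp.single 1 1 + Finsupp.single 2 1 := by
        ext i
        rw [degree'_esymm_spec m hm (by norm_num) (by norm_num)]
        fin_cases i <;> simp [Finsupp.single_apply]
      have := gen_in_initial m (esymm_isSymmetric (Fin 3) ℚ 3) (esymm_ne_zero (by norm_num))
      rw [h3] at this
      rw [hX 0, hX 1, hX 2, monomial_mul, monomial_mul, mul_one, mul_one]
      exact this
end
end

section
/- The subalgebra A = Algebra.adjoin ℚ {X + Y, X·Y, X·Y²} of MvPolynomial (Fin 2) ℚ has no finite subalgebra basis with respect to the degree-lexicographic order with X > Y: there is no finite subset G of A such that for every nonzero a ∈ A the leading term in_m(a) lies in the ℚ-subalgebra generated by { in_m(g) : g ∈ G, g ≠ 0 }. -/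
open MvPolynomial

noncomputable section

variable {n : ℕ}

-- auxiliary
namespace Sagbi

lemma toSyn_degree' (m : MonomialOrder (Fin n)) (f : MvPolynomial (Fin n) ℚ) :
    m.toSyn (m.degree' f) = f.support.sup fun d => m.toSyn d := by
  simp [MonomialOrder.degree']

lemma le_degree' (m : MonomialOrder (Fin n)) {f : MvPolynomial (Fin n) ℚ}
    {d : Fin n →₀ ℕ} (hd : d ∈ f.support) :
    m.toSyn d ≤ m.toSyn (m.degree' f) := by
  rw [toSyn_degree']; exact Finset.le_sup hd

lemma degree'_mem_support (m : MonomialOrder (Fin n)) {f : MvPolynomial (Fin n) ℚ}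
    (hf : f ≠ 0) : m.degree' f ∈ f.support := by
  obtain ⟨d, hd, hsup⟩ := Finset.exists_mem_eq_sup f.support
    (by simpa [MvPolynomial.support_eq_empty] using hf) fun d => m.toSyn d
  have : m.degree' f = d := by
    rw [MonomialOrder.degree', hsup]; exact m.toSyn.symm_apply_apply d
  rwa [this]

lemma coeff_degree'_ne_zero (m : MonomialOrder (Fin n)) {f : MvPolynomial (Fin n) ℚ}
    (hf : f ≠ 0) : f.coeff (m.degree' f) ≠ 0 := by
  simpa [MvPolynomial.mem_support_iff] using degree'_mem_support m hf

lemma degree'_monomial (m : MonomialOrder (Fin n)) (d : Fin n →₀ ℕ) {c : ℚ} (hc : c ≠ 0) :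
    m.degree' (monomial d c) = d := by
  rw [MonomialOrder.degree', support_monomial, if_neg hc, Finset.sup_singleton]
  exact m.toSyn.symm_apply_apply d

lemma leadTerm_monomial (m : MonomialOrder (Fin n)) (d : Fin n →₀ ℕ) {c : ℚ} (hc : c ≠ 0) :
    m.leadTerm (monomial d c) = monomial d c := by
  rw [MonomialOrder.leadTerm, degree'_monomial m d hc, coeff_monomial, if_pos rfl]

/-- The subalgebra of polynomials whose pure-power coefficients agree. -/
def symmCoeff : Subalgebra ℚ (MvPolynomial (Fin 2) ℚ) where
  carrier := {f | ∀ k : ℕ, f.coeff (Finsupp.single 0 k) = f.coeff (Finsupp.single 1 k)}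
  zero_mem' := by intro k; simp
  one_mem' := by
    intro k
    simp only [MvPolynomial.coeff_one]
    congr 1
    simp [eq_comm, Finsupp.single_eq_zero]
  add_mem' := by intro f g hf hg k; simp [coeff_add, hf k, hg k]
  mul_mem' := by
    intro f g hf hg k
    rw [coeff_mul, coeff_mul, Finsupp.antidiagonal_single, Finsupp.antidiagonal_single,
      Finset.sum_map, Finset.sum_map]
    apply Finset.sum_congr rfl
    intro p _
    simp only [Function.Embedding.coe_prodMap, Function.Embedding.coeFn_mk, Prod.map_fst,
      Prod.map_snd]
    rw [hf p.1, hg p.2]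
  algebraMap_mem' := by
    intro r k
    simp only [algebraMap_eq, coeff_C]
    congr 1
    simp [eq_comm, Finsupp.single_eq_zero]

lemma adjoin_le_symmCoeff :
    Algebra.adjoin ℚ ({X 0 + X 1, X 0 * X 1, X 0 * X 1 ^ 2} :
      Set (MvPolynomial (Fin 2) ℚ)) ≤ symmCoeff := by
  rw [Algebra.adjoin_le_iff]
  rintro p (rfl | rfl | rfl)
  · intro k
    simp only [coeff_add, coeff_X']
    have h1 : (Finsupp.single (0 : Fin 2) 1 = Finsupp.single 0 k) ↔ k = 1 := by
      rw [Finsupp.single_eq_single_iff]; simp [eq_comm]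
    have h2 : (Finsupp.single (1 : Fin 2) 1 = Finsupp.single 0 k) ↔ False := by
      rw [Finsupp.single_eq_single_iff]; simp
    have h3 : (Finsupp.single (0 : Fin 2) 1 = Finsupp.single 1 k) ↔ False := by
      rw [Finsupp.single_eq_single_iff]; simp
    have h4 : (Finsupp.single (1 : Fin 2) 1 = Finsupp.single 1 k) ↔ k = 1 := by
      rw [Finsupp.single_eq_single_iff]; simp [eq_comm]
    rw [if_congr h1 rfl rfl, if_congr h2 rfl rfl, if_congr h3 rfl rfl, if_congr h4 rfl rfl]
    simp
  · intro k
    rw [show (X 0 * X 1 : MvPolynomial (Fin 2) ℚ)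
        = monomial (Finsupp.single 0 1 + Finsupp.single 1 1) 1 by
      rw [monomial_single_add, pow_one, ← X_pow_eq_monomial, pow_one]]
    rw [coeff_monomial, coeff_monomial, if_neg, if_neg]
    · intro h
      have := DFunLike.congr_fun h 0
      simp at this
    · intro h
      have := DFunLike.congr_fun h 1
      simp at this
  · intro k
    rw [show (X 0 * X 1 ^ 2 : MvPolynomial (Fin 2) ℚ)
        = monomial (Finsupp.single 0 1 + Finsupp.single 1 2) 1 by
      rw [monomial_single_add, pow_one, ← X_pow_eq_monomial]]
    rw [coeff_monomial, coeff_monomial, if_neg, if_neg]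
    · intro h
      have := DFunLike.congr_fun h 0
      simp at this
    · intro h
      have := DFunLike.congr_fun h 1
      simp at this

lemma degree'_fst_zero (m : MonomialOrder (Fin 2)) (hm : m.IsDegLex)
    {f : MvPolynomial (Fin 2) ℚ}
    (hfA : f ∈ Algebra.adjoin ℚ ({X 0 + X 1, X 0 * X 1, X 0 * X 1 ^ 2} :
      Set (MvPolynomial (Fin 2) ℚ)))
    (hf : f ≠ 0) (h0 : (m.degree' f) 0 = 0) : m.degree' f = 0 := by
  set d := m.degree' f with hd
  set b := d 1 with hb
  have hds : d = Finsupp.single 1 b := by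
    ext i
    fin_cases i
    · simpa using h0
    · simp [hb]
  by_contra hne
  have hbpos : b ≠ 0 := by
    intro hb0
    apply hne
    rw [hds, hb0, Finsupp.single_zero]
  have hc : f.coeff d ≠ 0 := coeff_degree'_ne_zero m hf
  have hsym := adjoin_le_symmCoeff hfA b
  rw [← hds] at hsym
  have hc0 : f.coeff (Finsupp.single 0 b) ≠ 0 := by
    rw [hsym]; exact hc
  have hmem : Finsupp.single (0 : Fin 2) b ∈ f.support := by
    rwa [MvPolynomial.mem_support_iff]
  have hle := le_degree' m hmem
  have hlt : m.toSyn d < m.toSyn (Finsupp.single 0 b) := by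
    rw [hm]
    right
    constructor
    · rw [hds, Finsupp.sum_single_index (by rfl), Finsupp.sum_single_index (by rfl)]
    · rw [Finsupp.Lex.lt_iff]
      refine ⟨0, fun j hj => absurd hj (by simp), ?_⟩
      show d 0 < Finsupp.single (0 : Fin 2) b 0
      rw [h0, Finsupp.single_eq_same]
      exact Nat.pos_of_ne_zero hbpos
  exact absurd hle (not_le_of_gt hlt)

lemma xy_pow_eq (c : ℕ) : (X 0 * X 1 ^ c : MvPolynomial (Fin 2) ℚ)
    = monomial (Finsupp.single 0 1 + Finsupp.single 1 c) 1 := by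
  rw [monomial_single_add, pow_one, ← X_pow_eq_monomial]

lemma xyn_mem (c : ℕ) : (X 0 * X 1 ^ (c + 1) : MvPolynomial (Fin 2) ℚ)
    ∈ Algebra.adjoin ℚ ({X 0 + X 1, X 0 * X 1, X 0 * X 1 ^ 2} :
      Set (MvPolynomial (Fin 2) ℚ)) := by
  set A := Algebra.adjoin ℚ ({X 0 + X 1, X 0 * X 1, X 0 * X 1 ^ 2} :
      Set (MvPolynomial (Fin 2) ℚ)) with hA
  have h1 : (X 0 * X 1 : MvPolynomial (Fin 2) ℚ) ∈ A :=
    Algebra.subset_adjoin (by simp)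
  have h2 : (X 0 * X 1 ^ 2 : MvPolynomial (Fin 2) ℚ) ∈ A :=
    Algebra.subset_adjoin (by simp)
  have h0 : (X 0 + X 1 : MvPolynomial (Fin 2) ℚ) ∈ A :=
    Algebra.subset_adjoin (by simp)
  suffices h : ∀ k : ℕ, (X 0 * X 1 ^ (k + 1) : MvPolynomial (Fin 2) ℚ) ∈ A ∧
      (X 0 * X 1 ^ (k + 2) : MvPolynomial (Fin 2) ℚ) ∈ A from (h c).1
  intro k
  induction k with
  | zero => exact ⟨by simpa using h1, h2⟩
  | succ k ih =>
    refine ⟨ih.2, ?_⟩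
    have key : (X 0 * X 1 ^ (k + 3) : MvPolynomial (Fin 2) ℚ)
        = (X 0 * X 1 ^ (k + 2)) * (X 0 + X 1) - (X 0 * X 1 ^ (k + 1)) * (X 0 * X 1) := by
      ring
    rw [show k + 1 + 2 = k + 3 by ring, key]
    exact sub_mem (mul_mem ih.2 h0) (mul_mem ih.1 h1)

end Sagbi

/-- `ℚ[X+Y, XY, XY²]` has no finite subalgebra basis with respect to deg-lex. -/
theorem no_finite_subalgebraBasis (m : MonomialOrder (Fin 2)) (hm : m.IsDegLex) :
    ¬ ∃ G : Set (MvPolynomial (Fin 2) ℚ),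
      G ⊆ (Algebra.adjoin ℚ ({X 0 + X 1, X 0 * X 1, X 0 * X 1 ^ 2} :
          Set (MvPolynomial (Fin 2) ℚ)) : Set (MvPolynomial (Fin 2) ℚ)) ∧
      G.Finite ∧
      ∀ a ∈ Algebra.adjoin ℚ ({X 0 + X 1, X 0 * X 1, X 0 * X 1 ^ 2} :
          Set (MvPolynomial (Fin 2) ℚ)), a ≠ 0 →
        m.leadTerm a ∈ Algebra.adjoin ℚ {p | ∃ g ∈ G, g ≠ 0 ∧ p = m.leadTerm g} := by
  classical
  rintro ⟨G, hGA, hGfin, hGb⟩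
  set B := hGfin.toFinset.sup (fun g => (m.degree' g) 1) with hB
  set N := B + 1 with hN
  set e : Fin 2 →₀ ℕ := Finsupp.single 0 1 + Finsupp.single 1 N with he
  set M := AddSubmonoid.closure {d | ∃ g ∈ G, g ≠ 0 ∧ d = m.degree' g} with hM
  have haeq : (X 0 * X 1 ^ N : MvPolynomial (Fin 2) ℚ) = monomial e 1 := Sagbi.xy_pow_eq N
  have ha0 : (X 0 * X 1 ^ N : MvPolynomial (Fin 2) ℚ) ≠ 0 := by
    rw [haeq, Ne, MvPolynomial.monomial_eq_zero]
    exact one_ne_zero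
  have hlead : m.leadTerm (X 0 * X 1 ^ N) = monomial e 1 := by
    rw [haeq]; exact Sagbi.leadTerm_monomial m e one_ne_zero
  have hmem := hGb _ (Sagbi.xyn_mem B) ha0
  rw [hlead] at hmem
  -- every element of the adjoin of lead terms has support inside M
  have hsup : ∀ p ∈ Algebra.adjoin ℚ {p | ∃ g ∈ G, g ≠ 0 ∧ p = m.leadTerm g},
      ∀ d ∈ p.support, d ∈ M := by
    intro p hp
    induction hp using Algebra.adjoin_induction with
    | mem p hp =>
      obtain ⟨g, hg, hg0, rfl⟩ := hp
      intro d hd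
      rw [MonomialOrder.leadTerm] at hd
      have hd' : d = m.degree' g := by
        by_cases hc : g.coeff (m.degree' g) = 0
        · rw [MvPolynomial.support_monomial, if_pos hc] at hd
          exact absurd hd (Finset.notMem_empty d)
        · rw [MvPolynomial.support_monomial, if_neg hc, Finset.mem_singleton] at hd
          exact hd
      exact hd' ▸ AddSubmonoid.subset_closure ⟨g, hg, hg0, rfl⟩
    | algebraMap r =>
      intro d hd
      rw [MvPolynomial.algebraMap_eq, MvPolynomial.C_apply,
        MvPolynomial.support_monomial] at hd
      split_ifs at hd
      · exact absurd hd (Finset.notMem_empty d)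
      · rw [Finset.mem_singleton] at hd
        exact hd ▸ zero_mem M
    | add p q hp hq ihp ihq =>
      intro d hd
      rcases Finset.mem_union.mp (MvPolynomial.support_add hd) with h | h
      · exact ihp d h
      · exact ihq d h
    | mul p q hp hq ihp ihq =>
      intro d hd
      obtain ⟨d1, hd1, d2, hd2, rfl⟩ := Finset.mem_add.mp (MvPolynomial.support_mul p q hd)
      exact add_mem (ihp d1 hd1) (ihq d2 hd2)
  have heM : e ∈ M := by
    apply hsup _ hmem
    rw [MvPolynomial.support_monomial, if_neg one_ne_zero]
    exact Finset.mem_singleton_self e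
  -- but e is not in M
  have hQ : ∀ d ∈ M, (d 0 = 0 → d = 0) ∧ (d 0 = 1 → d 1 ≤ B) := by
    intro d hd
    induction hd using AddSubmonoid.closure_induction with
    | mem d hd =>
      obtain ⟨g, hg, hg0, rfl⟩ := hd
      constructor
      · exact fun h => Sagbi.degree'_fst_zero m hm (hGA hg) hg0 h
      · intro _
        exact Finset.le_sup (f := fun g => (m.degree' g) 1) (hGfin.mem_toFinset.mpr hg)
    | zero => exact ⟨fun _ => rfl, fun h => by simp at h⟩
    | add d1 d2 _ _ ih1 ih2 =>
      constructor
      · intro h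
        rw [Finsupp.add_apply] at h
        have h1 : d1 0 = 0 := by omega
        have h2 : d2 0 = 0 := by omega
        rw [ih1.1 h1, ih2.1 h2, add_zero]
      · intro h
        rw [Finsupp.add_apply] at h
        rcases Nat.eq_zero_or_pos (d1 0) with h1 | h1
        · rw [ih1.1 h1, zero_add]
          rw [ih1.1 h1, Finsupp.coe_zero, Pi.zero_apply, zero_add] at h
          exact ih2.2 h
        · have h2 : d2 0 = 0 := by omega
          rw [ih2.1 h2, add_zero]
          rw [ih2.1 h2, Finsupp.coe_zero, Pi.zero_apply, add_zero] at h
          exact ih1.2 (by omega)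
  have := (hQ e heM).2 (by simp [he]) -- e 0 = 1
  have heN : e 1 = N := by simp [he]
  omega
end
end
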